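/- Let B : ℝ² × ℝ² → ℝ² be a symmetric bilinear map, let u(θ) = (cos θ, sin θ) and η(θ) = B(u(θ), u(θ)). Then η is differentiable with η′(θ) = 2·B(u(θ), (−sin θ, cos θ)), and for every θ the following are equivalent: (a) the vectors η(θ) and η′(θ) are linearly dependent; (b) there exists a nonzero w ∈ ℝ² with B(u(θ), w) = 0; (c) there exists a nonzero ν ∈ ℝ² such that ⟨B(u(θ), w), ν⟩ = 0 for all w ∈ ℝ². -/

import Mathlib

open Real

/-- Two vectors in `ℝ²` admit a nontrivial vanishing linear combination iff their
cross product vanishes. -/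
lemma cross_dep_iff (v w : ℝ × ℝ) :
    (∃ a b : ℝ, ¬(a = 0 ∧ b = 0) ∧ a • v + b • w = 0) ↔ v.1 * w.2 - v.2 * w.1 = 0 := by
  constructor
  · rintro ⟨a, b, hab, h⟩
    have h1 : a * v.1 + b * w.1 = 0 := congrArg Prod.fst h
    have h2 : a * v.2 + b * w.2 = 0 := congrArg Prod.snd h
    rcases not_and_or.mp hab with ha | hb
    · have : a * (v.1 * w.2 - v.2 * w.1) = 0 := by linear_combination w.2 * h1 - w.1 * h2
      exact (mul_eq_zero.mp this).resolve_left ha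
    · have : b * (v.1 * w.2 - v.2 * w.1) = 0 := by linear_combination v.1 * h2 - v.2 * h1
      exact (mul_eq_zero.mp this).resolve_left hb
  · intro h
    by_cases hv1 : v.1 = 0
    · by_cases hv2 : v.2 = 0
      · exact ⟨1, 0, by simp, by
          have : v = 0 := Prod.ext hv1 hv2
          simp [this]⟩
      · refine ⟨w.2, -v.2, by simp [hv2], ?_⟩
        ext
        · simp only [Prod.fst_add, Prod.smul_fst, smul_eq_mul, Prod.fst_zero]
          linear_combination h
        · simp only [Prod.snd_add, Prod.smul_snd, smul_eq_mul, Prod.snd_zero]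
          ring
    · refine ⟨w.1, -v.1, by simp [hv1], ?_⟩
      ext
      · simp only [Prod.fst_add, Prod.smul_fst, smul_eq_mul, Prod.fst_zero]
        ring
      · simp only [Prod.snd_add, Prod.smul_snd, smul_eq_mul, Prod.snd_zero]
        linear_combination -h

lemma bilin_expand (B : (ℝ × ℝ) →ₗ[ℝ] (ℝ × ℝ) →ₗ[ℝ] (ℝ × ℝ)) (x y z w : ℝ) :
    B (x, y) (z, w) = (x * z) • B (1, 0) (1, 0) + (x * w) • B (1, 0) (0, 1)
      + (y * z) • B (0, 1) (1, 0) + (y * w) • B (0, 1) (0, 1) := by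
  have e1 : (x, y) = x • ((1:ℝ), (0:ℝ)) + y • ((0:ℝ), (1:ℝ)) := by ext <;> simp
  have e2 : (z, w) = z • ((1:ℝ), (0:ℝ)) + w • ((0:ℝ), (1:ℝ)) := by ext <;> simp
  rw [e1, e2]
  simp only [map_add, map_smul, LinearMap.add_apply, LinearMap.smul_apply, smul_add,
    smul_smul]
  module

lemma lin_apply (T : (ℝ × ℝ) →ₗ[ℝ] (ℝ × ℝ)) (w : ℝ × ℝ) :
    T w = w.1 • T (1, 0) + w.2 • T (0, 1) := by
  conv_lhs => rw [show w = w.1 • ((1:ℝ), (0:ℝ)) + w.2 • ((0:ℝ), (1:ℝ)) by ext <;> simp]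
  rw [map_add, map_smul, map_smul]

theorem stmt1 (B : (ℝ × ℝ) →ₗ[ℝ] (ℝ × ℝ) →ₗ[ℝ] (ℝ × ℝ))
    (hB : ∀ u w : ℝ × ℝ, B u w = B w u) (θ : ℝ) :
    HasDerivAt (fun t : ℝ => B (cos t, sin t) (cos t, sin t))
      ((2 : ℝ) • B (cos θ, sin θ) (-sin θ, cos θ)) θ ∧
    ((¬ LinearIndependent ℝ
        ![B (cos θ, sin θ) (cos θ, sin θ), (2 : ℝ) • B (cos θ, sin θ) (-sin θ, cos θ)]) ↔
      (∃ w : ℝ × ℝ, w ≠ 0 ∧ B (cos θ, sin θ) w = 0)) ∧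
    ((∃ w : ℝ × ℝ, w ≠ 0 ∧ B (cos θ, sin θ) w = 0) ↔
      (∃ ν : ℝ × ℝ, ν ≠ 0 ∧ ∀ w : ℝ × ℝ,
        (B (cos θ, sin θ) w).1 * ν.1 + (B (cos θ, sin θ) w).2 * ν.2 = 0)) := by
  have hsym : B ((1:ℝ), (0:ℝ)) ((0:ℝ), (1:ℝ)) = B (0, 1) (1, 0) := hB _ _
  set c := cos θ with hc'
  set s := sin θ with hs'
  have pyth : c ^ 2 + s ^ 2 = 1 := by rw [hc', hs']; exact Real.cos_sq_add_sin_sq θ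
  -- derivative part
  have hd : HasDerivAt (fun t : ℝ => B (cos t, sin t) (cos t, sin t))
      ((2 : ℝ) • B (c, s) (-s, c)) θ := by
    have hcd : HasDerivAt cos (-s) θ := Real.hasDerivAt_cos θ
    have hsd : HasDerivAt sin c θ := Real.hasDerivAt_sin θ
    have h11 := ((hcd.mul hcd).smul_const (B ((1:ℝ), (0:ℝ)) ((1:ℝ), (0:ℝ))))
    have h12 := ((hcd.mul hsd).smul_const (B ((1:ℝ), (0:ℝ)) ((0:ℝ), (1:ℝ))))
    have h21 := ((hsd.mul hcd).smul_const (B ((0:ℝ), (1:ℝ)) ((1:ℝ), (0:ℝ))))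
    have h22 := ((hsd.mul hsd).smul_const (B ((0:ℝ), (1:ℝ)) ((0:ℝ), (1:ℝ))))
    have key := ((h11.add h12).add h21).add h22
    have hfun : (fun t : ℝ => B (cos t, sin t) (cos t, sin t)) =
        fun t => (cos t * cos t) • B ((1:ℝ), (0:ℝ)) ((1:ℝ), (0:ℝ))
          + (cos t * sin t) • B ((1:ℝ), (0:ℝ)) ((0:ℝ), (1:ℝ))
          + (sin t * cos t) • B ((0:ℝ), (1:ℝ)) ((1:ℝ), (0:ℝ))
          + (sin t * sin t) • B ((0:ℝ), (1:ℝ)) ((0:ℝ), (1:ℝ)) :=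
      funext fun t => bilin_expand B (cos t) (sin t) (cos t) (sin t)
    rw [hfun]
    refine key.congr_deriv ?_
    rw [bilin_expand B c s (-s) c, hsym]
    module
  refine ⟨hd, ?_, ?_⟩
  · -- (a) ↔ (b)
    have h1 : (B (c, s) (c, s)).1 = c * (B (c, s) (1, 0)).1 + s * (B (c, s) (0, 1)).1 := by
      rw [lin_apply (B (c, s)) (c, s)]; simp
    have h2 : (B (c, s) (c, s)).2 = c * (B (c, s) (1, 0)).2 + s * (B (c, s) (0, 1)).2 := by
      rw [lin_apply (B (c, s)) (c, s)]; simp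
    have h3 : (B (c, s) (-s, c)).1 = -s * (B (c, s) (1, 0)).1 + c * (B (c, s) (0, 1)).1 := by
      rw [lin_apply (B (c, s)) (-s, c)]; simp
    have h4 : (B (c, s) (-s, c)).2 = -s * (B (c, s) (1, 0)).2 + c * (B (c, s) (0, 1)).2 := by
      rw [lin_apply (B (c, s)) (-s, c)]; simp
    have hiff1 : (∃ a b : ℝ, a • B (c, s) (c, s) + b • ((2:ℝ) • B (c, s) (-s, c)) = 0
        ∧ ¬(a = 0 ∧ b = 0)) ↔
        (B (c, s) (c, s)).1 * ((2:ℝ) • B (c, s) (-s, c)).2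
          - (B (c, s) (c, s)).2 * ((2:ℝ) • B (c, s) (-s, c)).1 = 0 := by
      rw [← cross_dep_iff]
      constructor
      · rintro ⟨a, b, h, hab⟩; exact ⟨a, b, hab, h⟩
      · rintro ⟨a, b, hab, h⟩; exact ⟨a, b, h, hab⟩
    have hiff2 : (∃ w : ℝ × ℝ, w ≠ 0 ∧ B (c, s) w = 0) ↔
        (B (c, s) (1, 0)).1 * (B (c, s) (0, 1)).2
          - (B (c, s) (1, 0)).2 * (B (c, s) (0, 1)).1 = 0 := by
      rw [← cross_dep_iff]
      constructor
      · rintro ⟨w, hw, h⟩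
        refine ⟨w.1, w.2, fun ⟨ha, hb⟩ => hw (Prod.ext ha hb), ?_⟩
        rw [← lin_apply (B (c, s)) w, h]
      · rintro ⟨a, b, hab, h⟩
        refine ⟨(a, b), fun h0 => hab ⟨congrArg Prod.fst h0, congrArg Prod.snd h0⟩, ?_⟩
        rw [lin_apply (B (c, s)) (a, b)]
        simpa using h
    rw [LinearIndependent.pair_iff]
    push_neg
    simp only [← not_and]
    rw [show (∃ a b : ℝ, a • B (c, s) (c, s) + b • ((2:ℝ) • B (c, s) (-s, c)) = 0
        ∧ ¬(a = 0 ∧ b = 0)) ↔ _ from hiff1, hiff2]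
    constructor <;> intro h
    · simp only [Prod.smul_fst, Prod.smul_snd, smul_eq_mul] at h
      rw [h1, h2, h3, h4] at h
      linear_combination (1/2) * h
        - ((B (c, s) (1, 0)).1 * (B (c, s) (0, 1)).2
            - (B (c, s) (1, 0)).2 * (B (c, s) (0, 1)).1) * pyth
    · simp only [Prod.smul_fst, Prod.smul_snd, smul_eq_mul]
      rw [h1, h2, h3, h4]
      linear_combination (2 * (c ^ 2 + s ^ 2)) * h
  · -- (b) ↔ (c)
    have hiff2 : (∃ w : ℝ × ℝ, w ≠ 0 ∧ B (c, s) w = 0) ↔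
        (B (c, s) (1, 0)).1 * (B (c, s) (0, 1)).2
          - (B (c, s) (1, 0)).2 * (B (c, s) (0, 1)).1 = 0 := by
      rw [← cross_dep_iff]
      constructor
      · rintro ⟨w, hw, h⟩
        refine ⟨w.1, w.2, fun ⟨ha, hb⟩ => hw (Prod.ext ha hb), ?_⟩
        rw [← lin_apply (B (c, s)) w, h]
      · rintro ⟨a, b, hab, h⟩
        refine ⟨(a, b), fun h0 => hab ⟨congrArg Prod.fst h0, congrArg Prod.snd h0⟩, ?_⟩
        rw [lin_apply (B (c, s)) (a, b)]
        simpa using h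
    have hcd : (∃ x y : ℝ, ¬(x = 0 ∧ y = 0) ∧
        x • ((B (c, s) (1, 0)).1, (B (c, s) (0, 1)).1)
          + y • ((B (c, s) (1, 0)).2, (B (c, s) (0, 1)).2) = 0) ↔
        (B (c, s) (1, 0)).1 * (B (c, s) (0, 1)).2
          - (B (c, s) (0, 1)).1 * (B (c, s) (1, 0)).2 = 0 := by
      simpa using cross_dep_iff ((B (c, s) (1, 0)).1, (B (c, s) (0, 1)).1)
        ((B (c, s) (1, 0)).2, (B (c, s) (0, 1)).2)
    have hiff3 : (∃ ν : ℝ × ℝ, ν ≠ 0 ∧ ∀ w : ℝ × ℝ,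
        (B (c, s) w).1 * ν.1 + (B (c, s) w).2 * ν.2 = 0) ↔
        (B (c, s) (1, 0)).1 * (B (c, s) (0, 1)).2
          - (B (c, s) (0, 1)).1 * (B (c, s) (1, 0)).2 = 0 := by
      rw [← hcd]
      constructor
      · rintro ⟨ν, hν, h⟩
        refine ⟨ν.1, ν.2, fun ⟨ha, hb⟩ => hν (Prod.ext ha hb), ?_⟩
        have g1 := h (1, 0)
        have g2 := h (0, 1)
        ext
        · simp only [Prod.fst_add, Prod.smul_fst, smul_eq_mul, Prod.fst_zero]
          linear_combination g1
        · simp only [Prod.snd_add, Prod.smul_snd, smul_eq_mul, Prod.snd_zero]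
          linear_combination g2
      · rintro ⟨x, y, hxy, h⟩
        refine ⟨(x, y), fun h0 => hxy ⟨congrArg Prod.fst h0, congrArg Prod.snd h0⟩, ?_⟩
        intro w
        have g1 : x * (B (c, s) (1, 0)).1 + y * (B (c, s) (1, 0)).2 = 0 := by
          simpa using congrArg Prod.fst h
        have g2 : x * (B (c, s) (0, 1)).1 + y * (B (c, s) (0, 1)).2 = 0 := by
          simpa using congrArg Prod.snd h
        have hw1 : (B (c, s) w).1 = w.1 * (B (c, s) (1, 0)).1 + w.2 * (B (c, s) (0, 1)).1 := by
          rw [lin_apply (B (c, s)) w]; simp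
        have hw2 : (B (c, s) w).2 = w.1 * (B (c, s) (1, 0)).2 + w.2 * (B (c, s) (0, 1)).2 := by
          rw [lin_apply (B (c, s)) w]; simp
        rw [hw1, hw2]
        linear_combination w.1 * g1 + w.2 * g2
    rw [hiff2, hiff3]
    constructor <;> intro h <;> linear_combination h
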